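/- arXiv:0909.0993 — 3 statements merged into one kernel-verified Lean document; each statement's English description precedes it below -/
import Mathlib

section
/- Let M be a negative definite real symmetric r×r matrix with M_{ij} ≥ 0 for i ≠ j. If v ∈ ℝ^r is a vector such that (Mv)_j > 0 for every index j with v_j ≥ 0 (and with v_j > 0 for at least one such j if any exist), then v has no non-negative entries; equivalently the positive part v_+ of v is zero. -/
/-- Let `M` be a negative definite real symmetric `r × r` matrix with
`M i j ≥ 0` for `i ≠ j`.  If `v : ℝ^r` is a vector such that `(M *ᵥ v) j > 0` for every
index `j` with `v j ≥ 0`, then `v` has no non-negative entries (equivalently, the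
positive part `v₊` of `v` is zero). -/
theorem negdef_matrix_positive_part_vanishes
    {r : ℕ} (M : Matrix (Fin r) (Fin r) ℝ)
    (hsymm : M.IsSymm)
    (hnegdef : ∀ x : Fin r → ℝ, x ≠ 0 → dotProduct x (M.mulVec x) < 0)
    (hoffdiag : ∀ i j : Fin r, i ≠ j → 0 ≤ M i j)
    (v : Fin r → ℝ)
    (hv : ∀ j : Fin r, 0 ≤ v j → 0 < (M.mulVec v) j) :
    ∀ j : Fin r, v j < 0 := by
  -- positive and negative parts
  set p : Fin r → ℝ := fun i => max (v i) 0 with hp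
  set n : Fin r → ℝ := fun i => max (-(v i)) 0 with hn
  have hpnn : ∀ i, 0 ≤ p i := fun i => le_max_right _ _
  have hnnn : ∀ i, 0 ≤ n i := fun i => le_max_right _ _
  have hpn : ∀ i, p i = v i + n i := by
    intro i
    simp only [hp, hn]
    rcases le_total (v i) 0 with h | h
    · rw [max_eq_right h, max_eq_left (by linarith)]; ring
    · rw [max_eq_left h, max_eq_right (by linarith)]; ring
  -- Step 1 : v i ≤ 0 for all i
  have hle : ∀ i : Fin r, v i ≤ 0 := by
    by_contra hcon
    push_neg at hcon
    obtain ⟨i0, hi0⟩ := hcon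
    have hpne : p ≠ 0 := by
      intro h
      have := congrFun h i0
      simp only [hp, Pi.zero_apply] at this
      rw [max_eq_left hi0.le] at this
      linarith
    have hneg := hnegdef p hpne
    -- p = v + n as functions
    have hpfun : p = v + n := funext fun i => by rw [hpn i]; rfl
    have hsplit : dotProduct p (M.mulVec p)
        = dotProduct p (M.mulVec v) + dotProduct p (M.mulVec n) := by
      rw [hpfun, Matrix.mulVec_add, dotProduct_add]
    have h1 : 0 ≤ dotProduct p (M.mulVec v) := by
      apply Finset.sum_nonneg
      intro i _
      rcases le_or_gt 0 (v i) with h | h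
      · exact mul_nonneg (hpnn i) (hv i h).le
      · have : p i = 0 := by simp only [hp]; rw [max_eq_right h.le]
        rw [this]; simp
    have h2 : 0 ≤ dotProduct p (M.mulVec n) := by
      apply Finset.sum_nonneg
      intro i _
      rcases le_or_gt (v i) 0 with h | h
      · have : p i = 0 := by simp only [hp]; rw [max_eq_right h]
        rw [this]; simp
      · apply mul_nonneg (hpnn i)
        simp only [Matrix.mulVec, dotProduct]
        apply Finset.sum_nonneg
        intro j _
        rcases le_or_gt 0 (v j) with hj | hj
        · have : n j = 0 := by simp only [hn]; rw [max_eq_right (by linarith)]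
          rw [this]; simp
        · have hne : i ≠ j := fun e => by rw [e] at h; linarith
          exact mul_nonneg (hoffdiag i j hne) (hnnn j)
    linarith [hsplit, h1, h2]
  intro j
  rcases lt_or_ge (v j) 0 with h | h
  · exact h
  · exfalso
    have hMv := hv j h
    have : (M.mulVec v) j ≤ 0 := by
      simp only [Matrix.mulVec, dotProduct]
      apply Finset.sum_nonpos
      intro i _
      rcases eq_or_ne j i with rfl | hne
      · have : v j = 0 := le_antisymm (hle j) h
        rw [this]; simp
      · exact mul_nonpos_of_nonneg_of_nonpos (hoffdiag j i hne) (hle i)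
    linarith
end

section
/- Let R be a reduced excellent ring. If every subintegral extension R ↪ S contained in the integral closure of R in its total ring of fractions is an isomorphism, then every subintegral finite extension R ↪ S (S reduced) is an isomorphism. -/
universe u

/-- A finite extension of rings `f : R →+* S` is *subintegral* if it is injective,
finite, induces a bijection `Spec S → Spec R`, and induces isomorphisms of residue
fields at every prime. -/
def RingHom.IsSubintegral {R S : Type u} [CommRing R] [CommRing S]
    (f : R →+* S) : Prop :=
  Function.Injective f ∧ f.Finite ∧
  Function.Bijective (PrimeSpectrum.comap f) ∧
  ∀ q : PrimeSpectrum S,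
    Function.Bijective
      (letI := Localization.isLocalHom_localRingHom (q.asIdeal.comap f) q.asIdeal f rfl
       IsLocalRing.ResidueField.map
        (Localization.localRingHom (q.asIdeal.comap f) q.asIdeal f rfl))



section Aux

variable {A : Type*} [CommRing A]

/-- The submonoid of elements of the form `z ^ n * u` with `u ∈ M`. -/
def powMulSubmonoid (z : A) (M : Submonoid A) : Submonoid A where
  carrier := {y | ∃ (n : ℕ) (u : A), u ∈ M ∧ y = z ^ n * u}
  one_mem' := ⟨0, 1, M.one_mem, by simp⟩
  mul_mem' := by
    rintro a b ⟨n, u, hu, rfl⟩ ⟨m, v, hv, rfl⟩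
    exact ⟨n + m, u * v, M.mul_mem hu hv, by ring⟩

lemma mem_powMulSubmonoid {z y : A} {M : Submonoid A} :
    y ∈ powMulSubmonoid z M ↔ ∃ (n : ℕ) (u : A), u ∈ M ∧ y = z ^ n * u := Iff.rfl

lemma exists_prime_not_mem_disjoint [IsReduced A] (z : A) (M : Submonoid A)
    (h0 : (0 : A) ∉ M) (hz : ∀ u ∈ M, z * u ≠ 0) :
    ∃ q : Ideal A, q.IsPrime ∧ z ∉ q ∧ Disjoint (q : Set A) (M : Set A) := by
  have h0T : (0 : A) ∉ powMulSubmonoid z M := by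
    rw [mem_powMulSubmonoid]
    rintro ⟨n, u, hu, h⟩
    cases n with
    | zero => simp at h; exact h0 (h ▸ hu)
    | succ k =>
      have hnil : (z * u) ^ (k + 1) = 0 := by
        rw [mul_pow]
        have : z ^ (k + 1) * u ^ (k + 1) = (z ^ (k + 1) * u) * u ^ k := by ring
        rw [this, ← h, zero_mul]
      exact hz u hu (IsNilpotent.eq_zero ⟨k + 1, hnil⟩)
  have hdisj : Disjoint ((⊥ : Ideal A) : Set A) (powMulSubmonoid z M : Set A) := by
    rw [Set.disjoint_left]
    intro x hx
    have : x = 0 := by simpa using hx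
    subst this; exact fun hm => h0T hm
  obtain ⟨q, hq, -, hdq⟩ := Ideal.exists_le_prime_disjoint (⊥ : Ideal A) _ hdisj
  refine ⟨q, hq, fun hzq => ?_, ?_⟩
  · exact Set.disjoint_left.mp hdq hzq (mem_powMulSubmonoid.mpr ⟨1, 1, M.one_mem, by ring⟩)
  · exact hdq.mono_right (fun u hu => mem_powMulSubmonoid.mpr ⟨0, u, hu, by ring⟩)

lemma mem_minimalPrimes_annihilated [IsReduced A] {P : Ideal A}
    (hP : P ∈ minimalPrimes A) {x : A} (hx : x ∈ P) : ∃ u, u ∉ P ∧ u * x = 0 := by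
  haveI := hP.1.1
  by_contra h
  push_neg at h
  obtain ⟨q, hq, hzq, hdisj⟩ := exists_prime_not_mem_disjoint x P.primeCompl
    (fun h0 => h0 P.zero_mem)
    (fun u hu hc => h u hu (by rw [mul_comm]; exact hc))
  have hqP : q ≤ P := fun y hy => by_contra fun hyP => Set.disjoint_left.mp hdisj hy hyP
  exact hzq ((hP.2 ⟨hq, bot_le⟩ hqP) hx)

lemma notMem_minimalPrimes_of_nonZeroDivisor [IsReduced A] {P : Ideal A}
    (hP : P ∈ minimalPrimes A) {u : A} (hu : u ∈ nonZeroDivisors A) : u ∉ P := by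
  intro h
  obtain ⟨v, hvP, hv0⟩ := mem_minimalPrimes_annihilated hP h
  exact hvP (by rw [mem_nonZeroDivisors_iff_right.mp hu v hv0]; exact P.zero_mem)

lemma exists_mem_minimalPrimes_of_mul_eq_zero [IsReduced A] {a x : A}
    (h : x * a = 0) (hx : x ≠ 0) : ∃ P ∈ minimalPrimes A, a ∈ P := by
  have hnn : x ∉ nilradical A := by
    rw [mem_nilradical]
    exact fun hn => hx hn.eq_zero
  rw [nilradical_eq_sInf] at hnn
  obtain ⟨J, hJ, hxJ⟩ : ∃ J : Ideal A, J.IsPrime ∧ x ∉ J := by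
    by_contra hc
    push_neg at hc
    exact hnn (Submodule.mem_sInf.mpr fun J hJ => hc J hJ)
  haveI := hJ
  obtain ⟨P, hP, hPJ⟩ := Ideal.exists_minimalPrimes_le (I := ⊥) (J := J) bot_le
  haveI := hP.1.1
  refine ⟨P, hP, ?_⟩
  rcases hP.1.1.mem_or_mem (show x * a ∈ P from h.symm ▸ P.zero_mem) with h1 | h2
  · exact absurd (hPJ h1) hxJ
  · exact h2

end Aux

section Aux2

variable {R S : Type*} [CommRing R] [CommRing S]

lemma le_of_comap_le (f : R →+* S) (hfin : f.Finite)
    (hbij : Function.Bijective (PrimeSpectrum.comap f))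
    {q1 q2 : Ideal S} (h1 : q1.IsPrime) (h2 : q2.IsPrime)
    (h : q1.comap f ≤ q2.comap f) : q1 ≤ q2 := by
  letI := f.toAlgebra
  haveI : Module.Finite R S := hfin
  haveI : Algebra.IsIntegral R S := Algebra.IsIntegral.of_finite R S
  haveI := h2
  haveI : (q2.comap f).IsPrime := Ideal.IsPrime.comap f
  obtain ⟨Q, hQge, hQp, hQc⟩ :=
    Ideal.exists_ideal_over_prime_of_isIntegral (R := R) (S := S) (q2.comap f) q1 h
  have heq : (⟨Q, hQp⟩ : PrimeSpectrum S) = ⟨q2, h2⟩ :=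
    hbij.1 (PrimeSpectrum.ext hQc)
  exact le_trans hQge (le_of_eq (congrArg PrimeSpectrum.asIdeal heq))

lemma comap_mem_minimalPrimes (f : R →+* S) (hfin : f.Finite)
    (hbij : Function.Bijective (PrimeSpectrum.comap f))
    (q : PrimeSpectrum S) (hq : q.asIdeal ∈ minimalPrimes S) :
    ((PrimeSpectrum.comap f) q).asIdeal ∈ minimalPrimes R := by
  refine ⟨⟨((PrimeSpectrum.comap f) q).2, bot_le⟩, ?_⟩
  rintro p' ⟨hp', -⟩ hle
  obtain ⟨q', hq'⟩ := hbij.2 ⟨p', hp'⟩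
  have hq'c : q'.asIdeal.comap f = p' := congrArg PrimeSpectrum.asIdeal hq'
  have hcle : q'.asIdeal.comap f ≤ q.asIdeal.comap f := by rw [hq'c]; exact hle
  have hqq : q'.asIdeal ≤ q.asIdeal := le_of_comap_le f hfin hbij q'.2 q.2 hcle
  have h2 := hq.2 ⟨q'.2, bot_le⟩ hqq
  calc ((PrimeSpectrum.comap f) q).asIdeal = q.asIdeal.comap f := rfl
    _ ≤ q'.asIdeal.comap f := Ideal.comap_mono h2
    _ = p' := hq'c

lemma preimage_mem_minimalPrimes (f : R →+* S)
    (hbij : Function.Bijective (PrimeSpectrum.comap f))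
    {q : PrimeSpectrum S} {p : PrimeSpectrum R} (hc : (PrimeSpectrum.comap f) q = p)
    (hp : p.asIdeal ∈ minimalPrimes R) : q.asIdeal ∈ minimalPrimes S := by
  refine ⟨⟨q.2, bot_le⟩, ?_⟩
  rintro q' ⟨hq', -⟩ hle
  haveI := hq'
  haveI : (q'.comap f).IsPrime := Ideal.IsPrime.comap f
  have h1 : q'.comap f ≤ p.asIdeal := by
    rw [← hc]; exact Ideal.comap_mono hle
  have h2 : p.asIdeal ≤ q'.comap f := hp.2 ⟨inferInstance, bot_le⟩ h1
  have heq : (PrimeSpectrum.comap f) ⟨q', hq'⟩ = (PrimeSpectrum.comap f) q := by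
    refine PrimeSpectrum.ext ?_
    show q'.comap f = q.asIdeal.comap f
    rw [le_antisymm h1 h2, ← hc]; rfl
  have h3 := hbij.1 heq
  exact le_of_eq (congrArg PrimeSpectrum.asIdeal h3.symm)

end Aux2

section Aux3

variable {A B : Type*} [CommRing A] [CommRing B]

lemma maximalIdeal_localization_atPrime_eq_bot [IsReduced A] {P : Ideal A} [P.IsPrime]
    (hP : P ∈ minimalPrimes A) :
    IsLocalRing.maximalIdeal (Localization.AtPrime P) = ⊥ := by
  refine le_antisymm (fun x hx => ?_) bot_le
  have hnil := (haveI := Ring.KrullDimLE.of_isLocalization P hP (Localization.AtPrime P)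
    Ring.KrullDimLE.isNilpotent_iff_mem_maximalIdeal.mpr hx)
  simpa using hnil.eq_zero

lemma surjective_of_residueField_map_surjective {I : Ideal A} {J : Ideal B}
    [I.IsPrime] [J.IsPrime]
    (φ : Localization.AtPrime I →+* Localization.AtPrime J) [IsLocalHom φ]
    (hbot : IsLocalRing.maximalIdeal (Localization.AtPrime J) = ⊥)
    (hsurj : Function.Surjective (IsLocalRing.ResidueField.map φ)) :
    Function.Surjective φ := by
  intro y
  obtain ⟨t, ht⟩ := hsurj (IsLocalRing.residue _ y)
  obtain ⟨x, rfl⟩ := IsLocalRing.residue_surjective t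
  rw [IsLocalRing.ResidueField.map_residue] at ht
  have hmem : φ x - y ∈ IsLocalRing.maximalIdeal (Localization.AtPrime J) :=
    Ideal.Quotient.eq.mp ht
  rw [hbot, Ideal.mem_bot, sub_eq_zero] at hmem
  exact ⟨x, hmem⟩

lemma residueField_map_surjective_of_surjective [IsLocalRing A] [IsLocalRing B]
    (φ : A →+* B) [IsLocalHom φ] (h : Function.Surjective φ) :
    Function.Surjective (IsLocalRing.ResidueField.map φ) := by
  intro y
  obtain ⟨b, rfl⟩ := IsLocalRing.residue_surjective y
  obtain ⟨a, rfl⟩ := h b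
  exact ⟨IsLocalRing.residue _ a, IsLocalRing.ResidueField.map_residue φ a⟩

lemma localRingHom_equiv_surjective (e : A ≃+* B) (J : Ideal B) [J.IsPrime]
    (I : Ideal A) [I.IsPrime] (hIJ : I = J.comap (e : A →+* B)) :
    Function.Surjective (Localization.localRingHom I J (e : A →+* B) hIJ) := by
  intro y
  obtain ⟨⟨s', w'⟩, rfl⟩ := IsLocalization.mk'_surjective J.primeCompl y
  have hw : e.symm w' ∈ I.primeCompl := by
    intro hmem
    rw [hIJ] at hmem
    have : e (e.symm (w' : B)) ∈ J := hmem
    rw [e.apply_symm_apply] at this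
    exact w'.2 this
  refine ⟨IsLocalization.mk' _ (e.symm s') ⟨e.symm (w' : B), hw⟩, ?_⟩
  rw [Localization.localRingHom_mk']
  have h1 : e (e.symm s') = s' := e.apply_symm_apply s'
  have h2 : ((⟨(e : A →+* B) ((⟨e.symm (w' : B), hw⟩ : I.primeCompl) : A), by
      exact Localization.le_comap_primeCompl_iff.mpr (ge_of_eq hIJ) hw⟩ : J.primeCompl) : B)
      = (w' : B) := e.apply_symm_apply w'
  exact IsLocalization.mk'_eq_iff_eq.mpr (by rw [h2]; simp [h1])

end Aux3
section Key

variable {R S : Type*} [CommRing R] [CommRing S]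

lemma exists_nonZeroDivisor_mul_mem_range
    [IsReduced R] [IsReduced S] [IsNoetherianRing R]
    (f : R →+* S) (hinj : Function.Injective f) (hfin : f.Finite)
    (hbij : Function.Bijective (PrimeSpectrum.comap f))
    (hres : ∀ q : PrimeSpectrum S, Function.Surjective
      (IsLocalRing.ResidueField.map (Localization.localRingHom (q.asIdeal.comap f) q.asIdeal f rfl)))
    (s : S) : ∃ u ∈ nonZeroDivisors R, ∃ r : R, f u * s = f r := by
  by_contra hcon
  push_neg at hcon
  let I : Ideal R :=
    { carrier := {r | ∃ r', f r * s = f r'}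
      add_mem' := by
        rintro a b ⟨a', ha⟩ ⟨b', hb⟩
        exact ⟨a' + b', by rw [map_add, map_add, add_mul, ha, hb]⟩
      zero_mem' := ⟨0, by simp⟩
      smul_mem' := by
        rintro c x ⟨x', hx⟩
        exact ⟨c * x', by rw [smul_eq_mul, map_mul, map_mul, mul_assoc, hx]⟩ }
  have memI : ∀ r : R, r ∈ I ↔ ∃ r', f r * s = f r' := fun r => Iff.rfl
  have hFin := minimalPrimes.finite_of_isNoetherianRing R
  have hIsub : (I : Set R) ⊆ ⋃ p ∈ (hFin.toFinset : Set (Ideal R)), (id p : Ideal R) := by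
    intro r hr
    have hrI : r ∈ I := hr
    have hrnz : r ∉ nonZeroDivisors R := by
      intro hrz
      obtain ⟨r', h⟩ := (memI r).mp hrI
      exact hcon r hrz r' h
    obtain ⟨x, hx0, hxne⟩ : ∃ x, x * r = 0 ∧ x ≠ 0 := by
      by_contra hc
      push_neg at hc
      exact hrnz (mem_nonZeroDivisors_iff_right.mpr fun x h => hc x h)
    obtain ⟨P, hP, hrP⟩ := exists_mem_minimalPrimes_of_mul_eq_zero hx0 hxne
    exact Set.mem_biUnion (hFin.mem_toFinset.mpr hP) hrP
  obtain ⟨p, hpF, hIp⟩ := (Ideal.subset_union_prime (⊥ : Ideal R) (⊥ : Ideal R)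
    (fun i hi _ _ => ((hFin.mem_toFinset.mp hi).1.1))).mp hIsub
  have hpmin : p ∈ minimalPrimes R := hFin.mem_toFinset.mp hpF
  haveI hpprime : p.IsPrime := hpmin.1.1
  obtain ⟨q, hq⟩ := hbij.2 ⟨p, hpprime⟩
  have hp' : q.asIdeal.comap f = p := congrArg PrimeSpectrum.asIdeal hq
  have hqmin : q.asIdeal ∈ minimalPrimes S := preimage_mem_minimalPrimes f hbij hq hpmin
  haveI := q.2
  haveI : (q.asIdeal.comap f).IsPrime := Ideal.IsPrime.comap f
  have hbot := maximalIdeal_localization_atPrime_eq_bot (A := S) hqmin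
  have hφ : Function.Surjective
      (Localization.localRingHom (q.asIdeal.comap f) q.asIdeal f rfl) :=
    surjective_of_residueField_map_surjective _ hbot (hres q)
  obtain ⟨x, hx⟩ := hφ (algebraMap S (Localization.AtPrime q.asIdeal) s)
  obtain ⟨⟨r, u⟩, rfl⟩ := IsLocalization.mk'_surjective (q.asIdeal.comap f).primeCompl x
  rw [Localization.localRingHom_mk'] at hx
  rw [← IsLocalization.mk'_one (M := q.asIdeal.primeCompl) (Localization.AtPrime q.asIdeal) s] at hx
  obtain ⟨c, hc⟩ := (IsLocalization.eq (M := q.asIdeal.primeCompl)).mp hx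
  set z := f ↑u * s - f r with hz
  have hwz : (c : S) * z = 0 := by
    simp only [one_mul, Submonoid.coe_one] at hc
    rw [hz, mul_sub, ← hc, sub_self]
  have hz0 : ∃ u', u' ∉ q.asIdeal.comap f ∧ f u' * z = 0 := by
    by_contra hc2
    push_neg at hc2
    set M : Submonoid S := Submonoid.map f ((q.asIdeal.comap f).primeCompl) with hM
    have h0M : (0 : S) ∉ M := by
      rintro ⟨v, hv, hv0⟩
      have hv' : v = 0 := hinj (by rw [hv0, map_zero])
      exact hv (hv' ▸ (q.asIdeal.comap f).zero_mem)
    have hzM : ∀ v ∈ M, z * v ≠ 0 := by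
      rintro _ ⟨v, hv, rfl⟩ h0
      exact hc2 v hv (by rw [mul_comm] at h0; exact h0)
    obtain ⟨q', hq'p, hzq', hdisj⟩ := exists_prime_not_mem_disjoint z M h0M hzM
    have hcomap : q'.comap f ≤ q.asIdeal.comap f := by
      intro y hy
      by_contra hyn
      exact Set.disjoint_left.mp hdisj hy ⟨y, hyn, rfl⟩
    have hle : q' ≤ q.asIdeal := le_of_comap_le f hfin hbij hq'p q.2 hcomap
    have hcq' : (c : S) ∈ q' := by
      rcases hq'p.mem_or_mem (show (c : S) * z ∈ q' by rw [hwz]; exact q'.zero_mem) with h | h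
      · exact h
      · exact absurd h hzq'
    exact c.2 (hle hcq')
  obtain ⟨u', hu'p, hu'z⟩ := hz0
  have hfinal : f (u' * ↑u) * s = f (u' * r) := by
    rw [hz, mul_sub] at hu'z
    have h' : f u' * (f ↑u * s) = f u' * f r := sub_eq_zero.mp hu'z
    rw [map_mul, map_mul, mul_assoc, h']
  have hmem : u' * ↑u ∈ p := hIp ⟨u' * r, hfinal⟩
  rw [← hp'] at hmem
  rcases (inferInstance : (q.asIdeal.comap f).IsPrime).mem_or_mem hmem with h | h
  · exact hu'p h
  · exact u.2 h

end Key
section Transport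

variable {R S S' : Type u} [CommRing R] [CommRing S] [CommRing S']

lemma isSubintegral_comp (f : R →+* S) (hf : f.IsSubintegral) (e : S ≃+* S') :
    ((e : S →+* S').comp f).IsSubintegral := by
  obtain ⟨hinj, hfin, hbij, hres⟩ := hf
  refine ⟨e.injective.comp hinj, ?_, ?_, ?_⟩
  · exact RingHom.Finite.comp (RingHom.Finite.of_surjective _ e.surjective) hfin
  · rw [PrimeSpectrum.comap_comp]
    refine Function.Bijective.comp hbij ?_
    refine Function.bijective_iff_has_inverse.mpr ⟨PrimeSpectrum.comap (e.symm : S' →+* S), ?_, ?_⟩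
    · intro x
      refine PrimeSpectrum.ext ?_
      show Ideal.comap _ (Ideal.comap _ x.asIdeal) = x.asIdeal
      ext y
      simp only [Ideal.mem_comap]
      rw [show ((e : S →+* S') ((e.symm : S' →+* S) y)) = y from e.apply_symm_apply y]
    · intro x
      refine PrimeSpectrum.ext ?_
      show Ideal.comap _ (Ideal.comap _ x.asIdeal) = x.asIdeal
      ext y
      simp only [Ideal.mem_comap]
      rw [show ((e.symm : S' →+* S) ((e : S →+* S') y)) = y from e.symm_apply_apply y]
  · intro q'
    haveI := q'.2
    set g' : S →+* S' := (e : S →+* S') with hg'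
    set q : PrimeSpectrum S := PrimeSpectrum.comap g' q' with hqdef
    haveI := q.2
    constructor
    · exact RingHom.injective _
    · have hcomp := Localization.localRingHom_comp
        (q.asIdeal.comap f) q.asIdeal q'.asIdeal f rfl g' rfl
      have h1 := (hres q).2
      haveI := Localization.isLocalHom_localRingHom (q.asIdeal.comap f) q.asIdeal f rfl
      haveI := Localization.isLocalHom_localRingHom q.asIdeal q'.asIdeal g' rfl
      haveI := Localization.isLocalHom_localRingHom (q.asIdeal.comap f) q'.asIdeal (g'.comp f)
        (by rw [show q.asIdeal = q'.asIdeal.comap g' from rfl, Ideal.comap_comap f g'])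
      have h2 := residueField_map_surjective_of_surjective _
          (localRingHom_equiv_surjective e q'.asIdeal q.asIdeal rfl)
      have h3 : Function.Surjective
          (IsLocalRing.ResidueField.map
            ((Localization.localRingHom q.asIdeal q'.asIdeal g' rfl).comp
              (Localization.localRingHom (q.asIdeal.comap f) q.asIdeal f rfl))) := by
        rw [IsLocalRing.ResidueField.map_comp, RingHom.coe_comp]
        exact h2.comp h1
      have h4 : Function.Surjective
          (IsLocalRing.ResidueField.map
            (Localization.localRingHom (q.asIdeal.comap f) q'.asIdeal (g'.comp f)
              rfl)) := by
        have hmapeq : IsLocalRing.ResidueField.map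
            (Localization.localRingHom (q.asIdeal.comap f) q'.asIdeal (g'.comp f)
              rfl) =
            IsLocalRing.ResidueField.map
            ((Localization.localRingHom q.asIdeal q'.asIdeal g' rfl).comp
              (Localization.localRingHom (q.asIdeal.comap f) q.asIdeal f rfl)) := by
          congr 1
        rw [hmapeq]
        exact h3
      exact h4
      
end Transport


lemma exists_embedding_toFractionRing
    {R S : Type u} [CommRing R] [CommRing S] [IsReduced R] [IsReduced S] [IsNoetherianRing R]
    (f : R →+* S) (hinj : Function.Injective f) (hfin : f.Finite)
    (hbij : Function.Bijective (PrimeSpectrum.comap f))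
    (hres' : ∀ q : PrimeSpectrum S, Function.Surjective
      (IsLocalRing.ResidueField.map (Localization.localRingHom (q.asIdeal.comap f) q.asIdeal f rfl)))
    (key : ∀ s : S, ∃ u ∈ nonZeroDivisors R, ∃ r : R, f u * s = f r)
    (hMle : Submonoid.map f (nonZeroDivisors R) ≤ nonZeroDivisors S) :
    ∃ (ι : S →+* FractionRing R), Function.Injective ι ∧
      (∀ r : R, ι (f r) = algebraMap R (FractionRing R) r) := by
  classical
  set K := FractionRing R with hK
  set M : Submonoid S := Submonoid.map f (nonZeroDivisors R) with hMdef
  set L := Localization M with hL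
  let g : K →+* L := IsLocalization.map (S := K) (T := M) L f (Submonoid.le_comap_map (nonZeroDivisors R))
  have ginj : Function.Injective g :=
    IsLocalization.map_injective_of_injective (M := nonZeroDivisors R) (S := K) (Q := L) hinj
  have gsurj : Function.Surjective g := by
    intro x
    obtain ⟨⟨t, m⟩, rfl⟩ := IsLocalization.mk'_surjective M x
    obtain ⟨u, hu, hum⟩ := m.2
    obtain ⟨v, hv, r, hvr⟩ := key t
    refine ⟨IsLocalization.mk' K r ⟨v * u, mul_mem hv hu⟩, ?_⟩
    rw [show g = IsLocalization.map (S := K) (T := M) L f (Submonoid.le_comap_map (nonZeroDivisors R)) from rfl]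
    rw [IsLocalization.map_mk']
    refine IsLocalization.mk'_eq_iff_eq.mpr ?_
    congr 1
    show (m : S) * f r = f (v * u) * t
    rw [← hum, ← hvr, map_mul]
    ring
  let gE : K ≃+* L := RingEquiv.ofBijective g ⟨ginj, gsurj⟩
  let ι : S →+* K := (gE.symm : L →+* K).comp (algebraMap S L)
  refine ⟨ι, ?_, ?_⟩
  · have h2 : Function.Injective (algebraMap S L) := IsLocalization.injective L hMle
    exact gE.symm.injective.comp h2
  · intro r
    have h1 : g (algebraMap R K r) = algebraMap S L (f r) := IsLocalization.map_eq _ _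
    show gE.symm (algebraMap S L (f r)) = algebraMap R K r
    rw [← h1]
    exact gE.symm_apply_apply _

/-- Let `R` be a reduced excellent (here: reduced Noetherian) ring.  If
every subintegral extension `R ↪ S` contained in the integral closure of `R` in its
total ring of fractions is an isomorphism, then every subintegral finite extension
`R ↪ S` with `S` reduced is an isomorphism.  (This is the equivalence of the
Greco–Traverso and Swan definitions of seminormality.) -/
theorem seminormal_of_seminormal_inside_integral_closure
    (R : Type u) [CommRing R] [IsReduced R] [IsNoetherianRing R]
    -- every subintegral extension of R inside the integral closure of R in its total
    -- ring of fractions is an isomorphism: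
    (hGT : ∀ S : Subalgebra R (FractionRing R),
      (∀ x ∈ S, IsIntegral R x) →
      (algebraMap R ↥S).IsSubintegral → Function.Bijective (algebraMap R ↥S)) :
    -- then every subintegral finite extension of R by a reduced ring is an isomorphism:
    ∀ (S : Type u) [CommRing S] [IsReduced S] (f : R →+* S),
      f.IsSubintegral → Function.Bijective f := by
  intro S _ _ f hf
  obtain ⟨hinj, hfin, hbij, hres⟩ := id hf
  have hres' : ∀ q : PrimeSpectrum S, Function.Surjective
      (IsLocalRing.ResidueField.map
        (Localization.localRingHom (q.asIdeal.comap f) q.asIdeal f rfl)) :=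
    fun q => (hres q).2
  have key := exists_nonZeroDivisor_mul_mem_range f hinj hfin hbij hres'
  have hMle : Submonoid.map f (nonZeroDivisors R) ≤ nonZeroDivisors S := by
    rintro _ ⟨u, hu, rfl⟩
    rw [mem_nonZeroDivisors_iff_right]
    intro x hx
    by_contra hxne
    obtain ⟨q0, hq0min, hq0mem⟩ := exists_mem_minimalPrimes_of_mul_eq_zero hx hxne
    haveI : q0.IsPrime := hq0min.1.1
    have hp0 : ((PrimeSpectrum.comap f) ⟨q0, inferInstance⟩).asIdeal ∈ minimalPrimes R :=
      comap_mem_minimalPrimes f hfin hbij _ hq0min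
    exact notMem_minimalPrimes_of_nonZeroDivisor hp0 hu (Ideal.mem_comap.mpr hq0mem)
  obtain ⟨ι0, hι0inj, hι0comm⟩ :=
    exists_embedding_toFractionRing f hinj hfin hbij hres' key hMle
  letI : Algebra R S := f.toAlgebra
  haveI : Module.Finite R S := hfin
  haveI : Algebra.IsIntegral R S := Algebra.IsIntegral.of_finite R S
  let ι : S →ₐ[R] FractionRing R := { toRingHom := ι0, commutes' := fun r => hι0comm r }
  have hιinj : Function.Injective ι := hι0inj
  let S' : Subalgebra R (FractionRing R) := ι.range
  have hint : ∀ x ∈ S', IsIntegral R x := by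
    rintro x ⟨s0, rfl⟩
    exact IsIntegral.map ι (Algebra.IsIntegral.isIntegral s0)
  let e : S ≃ₐ[R] ↥S' := AlgEquiv.ofInjective ι hιinj
  have heq : (algebraMap R ↥S') = ((e : S ≃+* ↥S') : S →+* ↥S').comp f := by
    ext r
    exact congrArg Subtype.val (e.commutes r).symm
  have hsub : (algebraMap R ↥S').IsSubintegral := by
    rw [heq]
    exact isSubintegral_comp f hf _
  have hbijS' := hGT S' hint hsub
  refine ⟨hinj, ?_⟩
  intro s0
  obtain ⟨r, hr⟩ := hbijS'.2 (e s0)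
  refine ⟨r, e.injective ?_⟩
  have h5 : algebraMap R ↥S' r = e (f r) := by rw [heq]; rfl
  rw [← h5, hr]
end

section
/- Let (R, m) be an F-finite local ring of characteristic p > 0 such that R is F-injective and the punctured spectrum Spec R ∖ {m} is Cohen–Macaulay. Then m · H^i_m(R) = 0 for all i < dim R, i.e., R is quasi-Buchsbaum. -/
/-- Let `(R, m)` be an `F`-finite Noetherian local ring of prime
characteristic `p > 0` which is `F`-injective, and whose punctured spectrum
`Spec R ∖ {m}` is Cohen–Macaulay.  Then `m · H^i_m(R) = 0` for all `i < dim R`;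
that is, `R` is quasi-Buchsbaum.

Since the Frobenius action on local cohomology is not available in Mathlib, the local
cohomology modules `H i = H^i_m(R)` are abstracted as `R`-modules equipped with their
natural (additive, `p`-linear) Frobenius actions `Frob i`, injective for all `i` by
`F`-injectivity of `R`.  Cohen–Macaulayness of the punctured spectrum enters through its
standard consequence: each `H^i_m(R)` with `i < dim R` is annihilated by some power
of `m`. -/
theorem Finjective_isolated_nonCM_is_quasiBuchsbaum
    (R : Type*) [CommRing R] [IsLocalRing R] [IsNoetherianRing R]
    (p : ℕ) (hp : Fact p.Prime) [CharP R p]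
    (hFfinite : (frobenius R p).Finite)                 -- R is F-finite
    (H : ℕ → Type*)                                     -- H i = H^i_m(R)
    [∀ i, AddCommGroup (H i)] [∀ i, Module R (H i)]
    (Frob : ∀ i, H i → H i)                             -- Frobenius action on H^i_m(R)
    (hadd : ∀ i (x y : H i), Frob i (x + y) = Frob i x + Frob i y)
    (hplin : ∀ i (r : R) (x : H i), Frob i (r • x) = (r ^ p) • Frob i x)
    (hFinj : ∀ i, Function.Injective (Frob i))          -- R is F-injective
    -- the punctured spectrum is Cohen–Macaulay, hence H^i_m(R) is killed by a power of m
    -- for i < dim R: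
    (hCM : ∀ i : ℕ, (i : WithBot (WithTop ℕ)) < ringKrullDim R →
      ∃ n : ℕ, ∀ c ∈ (IsLocalRing.maximalIdeal R) ^ n, ∀ x : H i, c • x = 0) :
    ∀ i : ℕ, (i : WithBot (WithTop ℕ)) < ringKrullDim R →
      ∀ c ∈ IsLocalRing.maximalIdeal R, ∀ x : H i, c • x = 0 := by
  intro i hi c hc x
  obtain ⟨n, hn⟩ := hCM i hi
  -- iterate Frobenius e times: (Frob i)^[e] (r • x) = r ^ (p ^ e) • (Frob i)^[e] x
  have key : ∀ (e : ℕ) (r : R) (y : H i),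
      (Frob i)^[e] (r • y) = (r ^ (p ^ e)) • (Frob i)^[e] y := by
    intro e
    induction e with
    | zero => simp
    | succ e ih =>
      intro r y
      rw [Function.iterate_succ_apply', Function.iterate_succ_apply', ih, hplin,
        ← pow_mul, ← pow_succ]
  have hinj : ∀ e : ℕ, Function.Injective ((Frob i)^[e]) := by
    intro e
    exact Function.Injective.iterate (hFinj i) e
  -- choose e with p ^ e ≥ n
  obtain ⟨e, he⟩ := pow_unbounded_of_one_lt (R := ℕ) n hp.out.one_lt
  apply hinj e
  rw [key]
  have hmem : c ^ p ^ e ∈ (IsLocalRing.maximalIdeal R) ^ n := by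
    have : c ^ p ^ e ∈ (IsLocalRing.maximalIdeal R) ^ (p ^ e) := Ideal.pow_mem_pow hc _
    exact Ideal.pow_le_pow_right he.le this
  rw [hn _ hmem]
  have h0 : Frob i 0 = 0 := by
    have := hadd i 0 0
    simpa using this.symm
  clear hmem he hn
  induction e with
  | zero => simp
  | succ e ih => rw [Function.iterate_succ_apply', ← ih, h0]
end
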